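/- Let ν be a compactly supported Borel probability measure on ℝ² with finite 1-energy I₁(ν) = ∬ |x−y|⁻¹ dν(x)dν(y) < ∞. Then for a.e. θ ∈ [0,π), the projected measure Π_θν is absolutely continuous with an L² density, and ∫₀^π ‖d(Π_θν)/dx‖²_{L²} dθ ≤ C·I₁(ν) for an absolute constant C. -/

import Mathlib

open Metric Set MeasureTheory Filter Real
open scoped ENNReal NNReal Topology

noncomputable section

abbrev E2 := EuclideanSpace ℝ (Fin 2)

def unitSq : Set E2 := {x | ∀ i, x i ∈ Set.Icc (0:ℝ) 1}

def IsContractingSimilarity (f : E2 → E2) : Prop :=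
  ∃ r : ℝ, 0 < r ∧ r < 1 ∧ ∀ x y, dist (f x) (f y) = r * dist x y

def IsLine (u : Set E2) : Prop :=
  ∃ p v : E2, v ≠ 0 ∧ u = {x | ∃ t : ℝ, x = p + t • v}

def proj (θ : ℝ) (x : E2) : ℝ := -Real.sin θ * x 0 + Real.cos θ * x 1

def lineAt (θ t : ℝ) : Set E2 := {x | proj θ x = t}

/-! ### Auxiliary lemmas -/

lemma sin_dist_lemma {t u : ℝ} (h : |Real.sin t| ≤ u) :
    ∃ k : ℤ, |t - k * π| ≤ π / 2 * u ∧ (k : ℝ) ∈ Set.Icc (t/π - 1/2) (t/π + 1/2) := by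
  have hπ := Real.pi_pos
  have hround := abs_le.1 (abs_sub_round (t / π))
  refine ⟨round (t / π), ?_, by constructor <;> [linarith [hround.1]; linarith [hround.2]]⟩
  set k := round (t / π) with hk
  set s := t - k * π with hs
  have hseq : s = (t / π - k) * π := by rw [hs]; field_simp
  have hsabs : |s| ≤ π / 2 := by
    rw [hseq, abs_mul, abs_of_pos hπ]
    have : |t / π - (k:ℝ)| ≤ 1/2 := abs_sub_round (t / π)
    nlinarith
  have hsin : |Real.sin s| = |Real.sin t| := by
    have h1 : Real.sin (s + k * π) = (-1 : ℝ)^k * Real.sin s := Real.sin_add_int_mul_pi s k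
    have h2 : s + k * π = t := by rw [hs]; ring
    rw [h2] at h1
    rcases Int.even_or_odd k with he | ho
    · rw [h1, he.neg_one_zpow, one_mul]
    · rw [h1, ho.neg_one_zpow, neg_one_mul, abs_neg]
  have habs : Real.sin |s| = |Real.sin s| := by
    rcases le_or_gt 0 s with h0 | h0
    · rw [abs_of_nonneg h0, abs_of_nonneg (Real.sin_nonneg_of_nonneg_of_le_pi h0
        (by linarith [abs_le.1 hsabs]))]
    · rw [abs_of_neg h0, Real.sin_neg, abs_of_nonpos ?_]
      exact Real.sin_nonpos_of_nonpos_of_neg_pi_le h0.le (by linarith [(abs_le.1 hsabs).1])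
  have key : 2 / π * |s| ≤ |Real.sin s| := by
    rw [← habs]
    exact Real.mul_le_sin (abs_nonneg s) hsabs
  have hku : 2 / π * |s| ≤ u := by rw [hsin] at key; linarith
  show |s| ≤ π / 2 * u
  have := mul_le_mul_of_nonneg_left hku (le_of_lt (by positivity : (0:ℝ) < π / 2))
  calc |s| = π / 2 * (2 / π * |s|) := by field_simp
    _ ≤ π / 2 * u := this

lemma vol_sin_set (α u : ℝ) (hu : 0 ≤ u) :
    volume {θ : ℝ | θ ∈ Set.Ico 0 π ∧ |Real.sin (α - θ)| ≤ u} ≤ ENNReal.ofReal (3 * π * u) := by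
  have hπ := Real.pi_pos
  rcases le_or_gt 1 u with h1 | h1
  · calc volume {θ : ℝ | θ ∈ Set.Ico 0 π ∧ |Real.sin (α - θ)| ≤ u}
        ≤ volume (Set.Ico 0 π) := measure_mono (fun θ hθ => hθ.1)
      _ = ENNReal.ofReal π := by rw [Real.volume_Ico, sub_zero]
      _ ≤ ENNReal.ofReal (3 * π * u) := ENNReal.ofReal_le_ofReal (by nlinarith)
  · set k₀ : ℤ := ⌊α / π⌋ with hk₀
    have hsub : {θ : ℝ | θ ∈ Set.Ico 0 π ∧ |Real.sin (α - θ)| ≤ u} ⊆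
        ⋃ k ∈ ({k₀ - 1, k₀, k₀ + 1} : Finset ℤ), closedBall (α - k * π) (π/2 * u) := by
      rintro θ ⟨⟨hθ0, hθπ⟩, hsin⟩
      obtain ⟨k, hk1, hk2⟩ := sin_dist_lemma hsin
      have hfl1 : (k₀ : ℝ) ≤ α / π := Int.floor_le _
      have hfl2 : α / π < k₀ + 1 := Int.lt_floor_add_one _
      have ht1 : (α - θ) / π ≤ α / π := by gcongr <;> linarith
      have ht2 : α / π - 1 ≤ (α - θ) / π := by
        rw [show α / π - 1 = (α - π) / π by field_simp]
        gcongr <;> linarith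
      have hkmem : k ∈ ({k₀ - 1, k₀, k₀ + 1} : Finset ℤ) := by
        simp only [Finset.mem_insert, Finset.mem_singleton]
        have hklo : ((k₀ : ℝ) - 2) < k := by
          have := hk2.1
          linarith
        have hkhi : (k : ℝ) < k₀ + 2 := by
          have := hk2.2
          linarith
        have h1' : k₀ - 2 < k := by exact_mod_cast hklo
        have h2' : k < k₀ + 2 := by exact_mod_cast hkhi
        omega
      refine Set.mem_biUnion hkmem ?_
      simp only [mem_closedBall, Real.dist_eq]
      have : θ - (α - k * π) = -(α - θ - k * π) := by ring
      rw [this, abs_neg]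
      exact hk1
    calc volume {θ : ℝ | θ ∈ Set.Ico 0 π ∧ |Real.sin (α - θ)| ≤ u}
        ≤ volume (⋃ k ∈ ({k₀ - 1, k₀, k₀ + 1} : Finset ℤ), closedBall (α - k * π) (π/2 * u)) :=
          measure_mono hsub
      _ ≤ ∑ k ∈ ({k₀ - 1, k₀, k₀ + 1} : Finset ℤ), volume (closedBall (α - k * π) (π/2 * u)) :=
          measure_biUnion_finset_le _ _
      _ ≤ ∑ _k ∈ ({k₀ - 1, k₀, k₀ + 1} : Finset ℤ), ENNReal.ofReal (π * u) := by
          apply Finset.sum_le_sum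
          intro k _
          rw [Real.volume_closedBall]
          exact ENNReal.ofReal_le_ofReal (by linarith)
      _ ≤ 3 * ENNReal.ofReal (π * u) := by
          rw [Finset.sum_const]
          have : ({k₀ - 1, k₀, k₀ + 1} : Finset ℤ).card ≤ 3 := by
            apply Finset.card_insert_le _ _ |>.trans
            simp [Finset.card_insert_le]
          calc ({k₀ - 1, k₀, k₀ + 1} : Finset ℤ).card • ENNReal.ofReal (π * u)
              ≤ 3 • ENNReal.ofReal (π * u) := nsmul_le_nsmul_left (zero_le) this
            _ = 3 * ENNReal.ofReal (π * u) := by simp [nsmul_eq_mul]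
      _ = ENNReal.ofReal (3 * π * u) := by
          rw [mul_assoc, ENNReal.ofReal_mul (by norm_num : (0:ℝ) ≤ 3)]
          norm_num

lemma vol_proj_close (x y : E2) {δ : ℝ} (hδ : 0 < δ) :
    volume {θ : ℝ | θ ∈ Set.Ico 0 π ∧ |proj θ x - proj θ y| ≤ δ} ≤
      ENNReal.ofReal (3 * π * δ) * (edist x y)⁻¹ := by
  have hπ := Real.pi_pos
  rcases eq_or_ne x y with rfl | hxy
  · have : (edist x x)⁻¹ = ⊤ := by simp
    rw [this, ENNReal.mul_top (by simp only [ne_eq, ENNReal.ofReal_eq_zero, not_le]; positivity)]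
    exact le_top
  · have hR : 0 < dist x y := dist_pos.2 hxy
    set R := dist x y with hRdef
    set w : ℂ := ⟨x 0 - y 0, x 1 - y 1⟩ with hw
    have habs : ‖w‖ = R := by
      rw [Complex.norm_def, Complex.normSq_mk, hRdef, EuclideanSpace.dist_eq]
      congr 1
      rw [Fin.sum_univ_two]
      simp [Real.dist_eq, sq_abs]
      ring
    have hw0 : w ≠ 0 := by
      intro h
      rw [h] at habs
      simp at habs
      exact hR.ne' habs.symm
    set α := Complex.arg w with hα
    have hcos : Real.cos α = (x 0 - y 0) / R := by
      rw [hα, Complex.cos_arg hw0, habs]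
    have hsin : Real.sin α = (x 1 - y 1) / R := by
      rw [hα, Complex.sin_arg, habs]
    have key : ∀ θ, proj θ x - proj θ y = R * Real.sin (α - θ) := by
      intro θ
      rw [Real.sin_sub, hcos, hsin]
      simp only [proj]
      field_simp
      ring
    have hset : {θ : ℝ | θ ∈ Set.Ico 0 π ∧ |proj θ x - proj θ y| ≤ δ} =
        {θ : ℝ | θ ∈ Set.Ico 0 π ∧ |Real.sin (α - θ)| ≤ δ / R} := by
      ext θ
      simp only [Set.mem_setOf_eq, and_congr_right_iff]
      intro _
      rw [key θ, abs_mul, abs_of_pos hR, le_div_iff₀ hR]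
      constructor <;> intro h <;> linarith
    rw [hset]
    calc volume {θ : ℝ | θ ∈ Set.Ico 0 π ∧ |Real.sin (α - θ)| ≤ δ / R}
        ≤ ENNReal.ofReal (3 * π * (δ / R)) := vol_sin_set α _ (by positivity)
      _ = ENNReal.ofReal (3 * π * δ) * (edist x y)⁻¹ := by
          rw [show 3 * π * (δ / R) = (3 * π * δ) / R by ring,
            ENNReal.ofReal_div_of_pos hR, edist_dist, ENNReal.div_eq_inv_mul, mul_comm]

/-! ### Continuity and measurability of `proj` -/

lemma continuous_proj_pair : Continuous fun p : ℝ × E2 => proj p.1 p.2 := by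
  have h0 : Continuous fun x : E2 => x 0 := (EuclideanSpace.proj (0 : Fin 2)).continuous
  have h1 : Continuous fun x : E2 => x 1 := (EuclideanSpace.proj (1 : Fin 2)).continuous
  exact ((Real.continuous_sin.comp continuous_fst).neg.mul (h0.comp continuous_snd)).add
    ((Real.continuous_cos.comp continuous_fst).mul (h1.comp continuous_snd))

lemma continuous_proj (θ : ℝ) : Continuous (proj θ) := by
  have h0 : Continuous fun x : E2 => x 0 := (EuclideanSpace.proj (0 : Fin 2)).continuous
  have h1 : Continuous fun x : E2 => x 1 := (EuclideanSpace.proj (1 : Fin 2)).continuous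
  exact (continuous_const.mul h0).add (continuous_const.mul h1)

lemma measurable_proj (θ : ℝ) : Measurable (proj θ) := (continuous_proj θ).measurable

/-! ### The discrete sequence of radii -/

def δseq (n : ℕ) : ℝ := 1 / (n + 1)

lemma δseq_pos (n : ℕ) : 0 < δseq n := by unfold δseq; positivity

lemma δseq_tendsto : Tendsto δseq atTop (nhdsWithin 0 (Set.Ioi 0)) := by
  apply tendsto_nhdsWithin_of_tendsto_nhds_of_eventually_within
  · exact tendsto_one_div_add_atTop_nhds_zero_nat
  · exact Eventually.of_forall fun n => δseq_pos n

/-- The liminf of ratios of measures of closed balls. -/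
def LD (μ : Measure ℝ) (t : ℝ) : ℝ≥0∞ :=
  liminf (fun n => μ (closedBall t (δseq n)) / volume (closedBall t (δseq n))) atTop

lemma measurable_measure_cb (μ : Measure ℝ) [SFinite μ] (δ : ℝ) :
    Measurable fun t => μ (closedBall t δ) := by
  have hS : MeasurableSet {q : ℝ × ℝ | dist q.2 q.1 ≤ δ} :=
    (isClosed_le (continuous_snd.dist continuous_fst) continuous_const).measurableSet
  have key : ∀ t, μ (closedBall t δ) =
      ∫⁻ s, ({q : ℝ × ℝ | dist q.2 q.1 ≤ δ}).indicator (fun _ => (1:ℝ≥0∞)) (t, s) ∂μ := by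
    intro t
    have : (fun s => ({q : ℝ × ℝ | dist q.2 q.1 ≤ δ}).indicator (fun _ => (1:ℝ≥0∞)) (t, s))
        = (closedBall t δ).indicator (fun _ => (1:ℝ≥0∞)) := by
      ext s
      by_cases h : s ∈ closedBall t δ
      · rw [Set.indicator_of_mem h, Set.indicator_of_mem]
        exact h
      · rw [Set.indicator_of_notMem h, Set.indicator_of_notMem]
        exact h
    show μ (closedBall t δ) = lintegral μ _
    rw [this]
    exact (lintegral_indicator_one measurableSet_closedBall).symm
  simp only [key]
  exact Measurable.lintegral_prod_right' (measurable_const.indicator hS)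

/-! ### Core lemma on the line: finiteness of the liminf integral implies L² density -/

lemma LD_measurable (μ : Measure ℝ) [SFinite μ] : Measurable (LD μ) := by
  apply Measurable.liminf
  intro n
  exact (measurable_measure_cb μ _).div (measurable_measure_cb volume _)

lemma line_lemma (μ : Measure ℝ) [IsFiniteMeasure μ] (h : (∫⁻ t, LD μ t ∂μ) < ⊤) :
    μ ≪ volume ∧ (∫⁻ t, (μ.rnDeriv volume t)^2) ≤ ∫⁻ t, LD μ t ∂μ := by
  have hLD := LD_measurable μ
  have hae : ∀ᵐ t ∂μ, LD μ t < ⊤ := ae_lt_top hLD h.ne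
  have hmain : ∀ s : Set ℝ, volume s = 0 → ∀ m : ℕ, μ (s ∩ {t | LD μ t < m}) = 0 := by
    intro s hvol m
    set ν' : Measure ℝ := ((m : ℝ≥0) : ℝ≥0∞) • volume with hν'
    haveI : IsLocallyFiniteMeasure ν' := by
      constructor
      intro x
      refine ⟨ball x 1, ball_mem_nhds x one_pos, ?_⟩
      rw [hν', Measure.smul_apply, smul_eq_mul]
      exact ENNReal.mul_lt_top (by simp) (by rw [Real.volume_ball]; exact ENNReal.ofReal_lt_top)
    have hle := (Besicovitch.vitaliFamily μ).measure_le_of_frequently_le ν'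
      Measure.AbsolutelyContinuous.rfl (s ∩ {t | LD μ t < m}) ?_
    · refine le_antisymm (hle.trans ?_) (zero_le)
      calc ν' (s ∩ {t | LD μ t < m}) ≤ ν' s := measure_mono inter_subset_left
        _ = 0 := by rw [hν', Measure.smul_apply, smul_eq_mul, hvol, mul_zero]
    · intro t ht
      have hfreq : ∃ᶠ n in atTop,
          μ (closedBall t (δseq n)) / volume (closedBall t (δseq n)) < m :=
        frequently_lt_of_liminf_lt (by isBoundedDefault) ht.2
      have htends : Tendsto (fun n => closedBall t (δseq n)) atTop
          ((Besicovitch.vitaliFamily μ).filterAt t) :=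
        (Besicovitch.tendsto_filterAt μ t).comp δseq_tendsto
      apply htends.frequently
      refine hfreq.mono fun n hn => ?_
      have hv0 : volume (closedBall t (δseq n)) ≠ 0 := by
        rw [Real.volume_closedBall]
        simp only [ne_eq, ENNReal.ofReal_eq_zero, not_le]
        linarith [δseq_pos n]
      have hvt : volume (closedBall t (δseq n)) ≠ ⊤ := by
        rw [Real.volume_closedBall]; exact ENNReal.ofReal_ne_top
      have := (ENNReal.div_lt_iff (Or.inl hv0) (Or.inl hvt)).1 hn
      rw [hν', Measure.smul_apply, smul_eq_mul]
      exact this.le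
  have hac : μ ≪ volume := by
    refine Measure.AbsolutelyContinuous.mk fun s hs hvol => ?_
    have hNs : μ {t | ¬ LD μ t < ⊤} = 0 := by
      rw [← compl_setOf]
      exact (ae_iff.1 hae)
    have hsub : s ⊆ (⋃ m : ℕ, s ∩ {t | LD μ t < m}) ∪ {t | ¬ LD μ t < ⊤} := by
      intro t hts
      by_cases hft : LD μ t < ⊤
      · left
        obtain ⟨m, hm⟩ := ENNReal.exists_nat_gt hft.ne
        exact Set.mem_iUnion.2 ⟨m, hts, hm⟩
      · right; exact hft
    refine le_antisymm ((measure_mono hsub).trans ?_) (zero_le)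
    rw [measure_union_null (measure_iUnion_null fun m => hmain s hvol m) hNs]
  refine ⟨hac, ?_⟩
  have htend := Besicovitch.ae_tendsto_rnDeriv μ volume
  have htend' : ∀ᵐ t ∂μ, Tendsto (fun r => μ (closedBall t r) / volume (closedBall t r))
      (nhdsWithin 0 (Set.Ioi 0)) (nhds (μ.rnDeriv volume t)) := hac.ae_le htend
  have heq : ∀ᵐ t ∂μ, μ.rnDeriv volume t = LD μ t := by
    filter_upwards [htend'] with t ht
    exact ((ht.comp δseq_tendsto).liminf_eq).symm
  have h1 : (∫⁻ t, μ.rnDeriv volume t ∂μ) = ∫⁻ t, (μ.rnDeriv volume t)^2 := by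
    have h2 := lintegral_withDensity_eq_lintegral_mul volume
      (Measure.measurable_rnDeriv μ volume) (Measure.measurable_rnDeriv μ volume)
    rw [Measure.withDensity_rnDeriv_eq μ volume hac] at h2
    rw [h2]
    congr 1
    ext t
    rw [pow_two]
    rfl
  rw [← h1, lintegral_congr_ae heq]

set_option maxHeartbeats 2000000 in
theorem stmt17 :
    ∃ C : ℝ, 0 < C ∧ ∀ ν : Measure E2, IsProbabilityMeasure ν →
      (∃ K : Set E2, IsCompact K ∧ ν Kᶜ = 0) →
      (∫⁻ p : E2 × E2, (edist p.1 p.2)⁻¹ ∂(ν.prod ν)) < ⊤ →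
      ∃ χ : ℝ → ℝ → ℝ,
        (∀ᵐ θ ∂(volume.restrict (Set.Ico 0 π)),
          Measure.map (proj θ) ν = volume.withDensity fun s => ENNReal.ofReal (χ θ s)) ∧
        (∫⁻ θ in Set.Ico 0 π, ∫⁻ s, ENNReal.ofReal ((χ θ s) ^ 2)) ≤
          ENNReal.ofReal C * ∫⁻ p : E2 × E2, (edist p.1 p.2)⁻¹ ∂(ν.prod ν) := by
  have hπ := Real.pi_pos
  refine ⟨3 * π / 2, by positivity, ?_⟩
  intro ν hprob _hcompact hI
  set I := ∫⁻ p : E2 × E2, (edist p.1 p.2)⁻¹ ∂(ν.prod ν) with hIdef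
  -- the probability measures projected to lines
  haveI hμprob : ∀ θ : ℝ, IsProbabilityMeasure (ν.map (proj θ)) := fun θ =>
    Measure.isProbabilityMeasure_map (measurable_proj θ).aemeasurable
  -- the bad sets
  have hcontq : Continuous fun q : ℝ × (E2 × E2) => proj q.1 q.2.1 - proj q.1 q.2.2 := by
    have h0 : Continuous fun x : E2 => x 0 := (EuclideanSpace.proj (0 : Fin 2)).continuous
    have h1 : Continuous fun x : E2 => x 1 := (EuclideanSpace.proj (1 : Fin 2)).continuous
    unfold proj
    have hs : Continuous fun q : ℝ × (E2 × E2) => Real.sin q.1 :=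
      Real.continuous_sin.comp continuous_fst
    have hc : Continuous fun q : ℝ × (E2 × E2) => Real.cos q.1 :=
      Real.continuous_cos.comp continuous_fst
    have ha : Continuous fun q : ℝ × (E2 × E2) => q.2.1 0 := h0.comp (continuous_snd.fst)
    have hb : Continuous fun q : ℝ × (E2 × E2) => q.2.1 1 := h1.comp (continuous_snd.fst)
    have ha' : Continuous fun q : ℝ × (E2 × E2) => q.2.2 0 := h0.comp (continuous_snd.snd)
    have hb' : Continuous fun q : ℝ × (E2 × E2) => q.2.2 1 := h1.comp (continuous_snd.snd)
    exact ((hs.neg.mul ha).add (hc.mul hb)).sub ((hs.neg.mul ha').add (hc.mul hb'))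
  set S : ℕ → Set (ℝ × (E2 × E2)) :=
    fun n => {q | |proj q.1 q.2.1 - proj q.1 q.2.2| ≤ δseq n} with hSdef
  have hSmeas : ∀ n, MeasurableSet (S n) := fun n =>
    (isClosed_le (continuous_abs.comp hcontq) continuous_const).measurableSet
  set Fn : ℕ → ℝ → ℝ≥0∞ := fun n θ =>
    (∫⁻ p : E2 × E2, (S n).indicator (fun _ => (1:ℝ≥0∞)) (θ, p) ∂(ν.prod ν)) /
      ENNReal.ofReal (2 * δseq n) with hFndef
  have hFnmeas : ∀ n, Measurable (Fn n) := fun n =>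
    (Measurable.lintegral_prod_right' (measurable_const.indicator (hSmeas n))).div
      measurable_const
  -- identity between the line integral and the double integral
  have hident : ∀ (θ : ℝ) (n : ℕ),
      (∫⁻ t, (ν.map (proj θ)) (closedBall t (δseq n)) ∂(ν.map (proj θ)))
        = ∫⁻ p : E2 × E2, (S n).indicator (fun _ => (1:ℝ≥0∞)) (θ, p) ∂(ν.prod ν) := by
    intro θ n
    rw [lintegral_map (measurable_measure_cb _ _) (measurable_proj θ)]
    have hprod : (∫⁻ p : E2 × E2, (S n).indicator (fun _ => (1:ℝ≥0∞)) (θ, p) ∂(ν.prod ν))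
        = ∫⁻ x, ∫⁻ y, (S n).indicator (fun _ => (1:ℝ≥0∞)) (θ, (x, y)) ∂ν ∂ν :=
      lintegral_prod _ ((measurable_const.indicator (hSmeas n)).comp
        measurable_prodMk_left).aemeasurable
    rw [hprod]
    congr 1
    ext x
    rw [Measure.map_apply (measurable_proj θ) measurableSet_closedBall]
    have hset : MeasurableSet {y : E2 | (θ, (x, y)) ∈ S n} :=
      (hSmeas n).preimage (measurable_prodMk_left.comp measurable_prodMk_left)
    have : (fun y : E2 => (S n).indicator (fun _ => (1:ℝ≥0∞)) (θ, (x, y)))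
        = {y : E2 | (θ, (x, y)) ∈ S n}.indicator (fun _ => (1:ℝ≥0∞)) := by
      ext y
      simp only [Set.indicator_apply, Set.mem_setOf_eq]
    rw [this]
    have h2 : (∫⁻ y, ({y : E2 | (θ, (x, y)) ∈ S n}).indicator (fun _ => (1:ℝ≥0∞)) y ∂ν)
        = ν {y : E2 | (θ, (x, y)) ∈ S n} := lintegral_indicator_one hset
    refine Eq.trans ?_ h2.symm
    congr 1
    ext y
    simp only [hSdef, Set.mem_preimage, Set.mem_setOf_eq, mem_closedBall, Real.dist_eq]
    rw [abs_sub_comm]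
  -- the swapped/bounded integral
  have hswap : ∀ n : ℕ,
      (∫⁻ θ in Set.Ico 0 π, ∫⁻ p : E2 × E2,
          (S n).indicator (fun _ => (1:ℝ≥0∞)) (θ, p) ∂(ν.prod ν) ∂volume)
        ≤ ENNReal.ofReal (3 * π * δseq n) * I := by
    intro n
    have hsw := lintegral_lintegral_swap (μ := volume.restrict (Set.Ico 0 π))
      (ν := ν.prod ν) (f := fun θ p => (S n).indicator (fun _ => (1:ℝ≥0∞)) (θ, p))
      ((measurable_const.indicator (hSmeas n)).aemeasurable)
    refine le_of_eq_of_le hsw ?_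
    have hbound : ∀ p : E2 × E2,
        (∫⁻ θ in Set.Ico 0 π, (S n).indicator (fun _ => (1:ℝ≥0∞)) (θ, p) ∂volume)
          ≤ ENNReal.ofReal (3 * π * δseq n) * (edist p.1 p.2)⁻¹ := by
      intro p
      have hmeasθ : MeasurableSet {θ : ℝ | (θ, p) ∈ S n} :=
        (hSmeas n).preimage (measurable_id.prodMk measurable_const)
      have : (fun θ : ℝ => (S n).indicator (fun _ => (1:ℝ≥0∞)) (θ, p))
          = {θ : ℝ | (θ, p) ∈ S n}.indicator (fun _ => (1:ℝ≥0∞)) := by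
        ext θ
        simp only [Set.indicator_apply, Set.mem_setOf_eq]
      rw [this]
      have h2 : (∫⁻ θ in Set.Ico 0 π, ({θ : ℝ | (θ, p) ∈ S n}).indicator (fun _ => (1:ℝ≥0∞)) θ)
          = volume.restrict (Set.Ico 0 π) {θ : ℝ | (θ, p) ∈ S n} := lintegral_indicator_one hmeasθ
      refine le_of_eq_of_le h2 ?_
      rw [Measure.restrict_apply hmeasθ]
      have hseteq : {θ : ℝ | (θ, p) ∈ S n} ∩ Set.Ico 0 π
          = {θ : ℝ | θ ∈ Set.Ico 0 π ∧ |proj θ p.1 - proj θ p.2| ≤ δseq n} := by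
        ext θ
        simp only [hSdef, Set.mem_inter_iff, Set.mem_setOf_eq]
        tauto
      rw [hseteq]
      exact vol_proj_close p.1 p.2 (δseq_pos n)
    refine le_trans (lintegral_mono fun p => hbound p) ?_
    refine le_of_eq ?_
    rw [hIdef]
    exact lintegral_const_mul _ (continuous_edist.measurable.comp
      (measurable_fst.prodMk measurable_snd)).inv
  -- bound on each Fn integral
  have hFn_bound : ∀ n : ℕ,
      (∫⁻ θ in Set.Ico 0 π, Fn n θ ∂volume) ≤ ENNReal.ofReal (3 * π / 2) * I := by
    intro n
    have hδ := δseq_pos n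
    have hc0 : ENNReal.ofReal (2 * δseq n) ≠ 0 := by
      simp only [ne_eq, ENNReal.ofReal_eq_zero, not_le]
      linarith
    have hct : ENNReal.ofReal (2 * δseq n) ≠ ⊤ := ENNReal.ofReal_ne_top
    have h1 : (∫⁻ θ in Set.Ico 0 π, Fn n θ ∂volume)
        = (∫⁻ θ in Set.Ico 0 π, ∫⁻ p : E2 × E2,
            (S n).indicator (fun _ => (1:ℝ≥0∞)) (θ, p) ∂(ν.prod ν) ∂volume) /
          ENNReal.ofReal (2 * δseq n) := by
      simp only [hFndef, div_eq_mul_inv]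
      rw [lintegral_mul_const' _ _ (by simp [hc0, hδ])]
    rw [h1]
    calc (∫⁻ θ in Set.Ico 0 π, ∫⁻ p : E2 × E2,
            (S n).indicator (fun _ => (1:ℝ≥0∞)) (θ, p) ∂(ν.prod ν) ∂volume) /
          ENNReal.ofReal (2 * δseq n)
        ≤ (ENNReal.ofReal (3 * π * δseq n) * I) / ENNReal.ofReal (2 * δseq n) :=
          ENNReal.div_le_div_right (hswap n) _
      _ = ENNReal.ofReal (3 * π / 2) * I := by
          rw [show (3 : ℝ) * π * δseq n = (2 * δseq n) * (3 * π / 2) by ring,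
            ENNReal.ofReal_mul (by linarith)]
          rw [mul_assoc, div_eq_mul_inv, mul_comm, ← mul_assoc,
            ENNReal.inv_mul_cancel hc0 hct, one_mul]
  -- the liminf function H
  set H : ℝ → ℝ≥0∞ := fun θ => liminf (fun n => Fn n θ) atTop with hHdef
  have hHmeas : Measurable H := Measurable.liminf hFnmeas
  have hHint : (∫⁻ θ in Set.Ico 0 π, H θ ∂volume) ≤ ENNReal.ofReal (3 * π / 2) * I := by
    calc (∫⁻ θ in Set.Ico 0 π, H θ ∂volume)
        ≤ liminf (fun n => ∫⁻ θ in Set.Ico 0 π, Fn n θ ∂volume) atTop :=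
          lintegral_liminf_le hFnmeas
      _ ≤ ENNReal.ofReal (3 * π / 2) * I := by
          exact liminf_le_of_frequently_le (Frequently.of_forall fun n => hFn_bound n)
            (by isBoundedDefault)
  have hHfin : ∀ᵐ θ ∂(volume.restrict (Set.Ico 0 π)), H θ < ⊤ := by
    apply ae_lt_top hHmeas
    exact (hHint.trans_lt (ENNReal.mul_lt_top ENNReal.ofReal_lt_top hI)).ne
  -- the integral of LD over the projected measure is at most H
  have hGH : ∀ θ : ℝ, (∫⁻ t, LD (ν.map (proj θ)) t ∂(ν.map (proj θ))) ≤ H θ := by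
    intro θ
    haveI := hμprob θ
    calc (∫⁻ t, LD (ν.map (proj θ)) t ∂(ν.map (proj θ)))
        ≤ liminf (fun n => ∫⁻ t, (ν.map (proj θ)) (closedBall t (δseq n)) /
            volume (closedBall t (δseq n)) ∂(ν.map (proj θ))) atTop :=
          lintegral_liminf_le fun n =>
            (measurable_measure_cb _ _).div (measurable_measure_cb volume _)
      _ = H θ := by
          congr 1
          ext n
          have hδ := δseq_pos n
          have hc0 : ENNReal.ofReal (2 * δseq n) ≠ 0 := by
            simp only [ne_eq, ENNReal.ofReal_eq_zero, not_le]
            linarith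
          have : ∀ t : ℝ, (ν.map (proj θ)) (closedBall t (δseq n)) /
              volume (closedBall t (δseq n))
              = (ν.map (proj θ)) (closedBall t (δseq n)) * (ENNReal.ofReal (2 * δseq n))⁻¹ := by
            intro t
            rw [Real.volume_closedBall, div_eq_mul_inv]
          simp only [this]
          rw [lintegral_mul_const' _ _ (by simp [hc0, hδ]), hident θ n]
          simp only [hFndef, div_eq_mul_inv]
  -- the density
  refine ⟨fun θ s => ((ν.map (proj θ)).rnDeriv volume s).toReal, ?_, ?_⟩
  · filter_upwards [hHfin] with θ hθ
    haveI := hμprob θ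
    have hfin : (∫⁻ t, LD (ν.map (proj θ)) t ∂(ν.map (proj θ))) < ⊤ := (hGH θ).trans_lt hθ
    obtain ⟨hac, _⟩ := line_lemma (ν.map (proj θ)) hfin
    refine Eq.trans (Measure.withDensity_rnDeriv_eq (ν.map (proj θ)) volume hac).symm ?_
    apply withDensity_congr_ae
    filter_upwards [Measure.rnDeriv_lt_top (ν.map (proj θ)) volume] with s hs
    exact (ENNReal.ofReal_toReal hs.ne).symm
  · calc (∫⁻ θ in Set.Ico 0 π, ∫⁻ s,
          ENNReal.ofReal ((((ν.map (proj θ)).rnDeriv volume s).toReal) ^ 2))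
        ≤ ∫⁻ θ in Set.Ico 0 π, H θ ∂volume := by
          apply lintegral_mono_ae
          filter_upwards [hHfin] with θ hθ
          haveI := hμprob θ
          have hfin : (∫⁻ t, LD (ν.map (proj θ)) t ∂(ν.map (proj θ))) < ⊤ :=
            (hGH θ).trans_lt hθ
          obtain ⟨hac, hbound⟩ := line_lemma (ν.map (proj θ)) hfin
          have heq : (∫⁻ s, ENNReal.ofReal ((((ν.map (proj θ)).rnDeriv volume s).toReal) ^ 2))
              = ∫⁻ s, ((ν.map (proj θ)).rnDeriv volume s) ^ 2 := by
            apply lintegral_congr_ae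
            filter_upwards [Measure.rnDeriv_lt_top (ν.map (proj θ)) volume] with s hs
            rw [← ENNReal.ofReal_toReal hs.ne, ← ENNReal.ofReal_pow ENNReal.toReal_nonneg]
            rw [ENNReal.ofReal_toReal hs.ne]
          rw [heq]
          exact hbound.trans (hGH θ)
      _ ≤ ENNReal.ofReal (3 * π / 2) * I := hHint
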